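/- Let n ≥ 1 and let σ be a permutation of {1,…,n} with permutation matrix P_σ. Then the set L(σ) of unit lower triangular real n×n matrices l such that P_σ l P_σ⁻¹ is lower triangular equals the set of unit lower triangular matrices l satisfying l_{ij} = 0 for all i > j with σ(i) < σ(j); moreover L(σ) is a subgroup of the invertible n×n matrices, i.e., it contains the identity and is closed under matrix multiplication and matrix inversion. -/

import Mathlib

open Matrix

/-- The permutation matrix of `σ`: `(P_σ)_{ab} = 1` if `a = σ b`, else `0`. -/
def permMat {n : ℕ} (σ : Equiv.Perm (Fin n)) : Matrix (Fin n) (Fin n) ℝ :=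
  Matrix.of fun a b => if a = σ b then (1 : ℝ) else 0

/-- Unit lower triangular: `1`s on the diagonal, `0`s above it. -/
def IsUnitLower {n : ℕ} (M : Matrix (Fin n) (Fin n) ℝ) : Prop :=
  (∀ i, M i i = 1) ∧ ∀ i j : Fin n, i < j → M i j = 0

/-- Lower triangular: `0`s above the diagonal. -/
def IsLower {n : ℕ} (M : Matrix (Fin n) (Fin n) ℝ) : Prop :=
  ∀ i j : Fin n, i < j → M i j = 0

/-- `L(σ)`: unit lower triangular matrices whose conjugate by `P_σ` is lower triangular. -/
def LSet {n : ℕ} (σ : Equiv.Perm (Fin n)) : Set (Matrix (Fin n) (Fin n) ℝ) :=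
  { l | IsUnitLower l ∧ IsLower (permMat σ * l * (permMat σ)⁻¹) }

lemma permMat_mul {n : ℕ} (σ : Equiv.Perm (Fin n)) (M : Matrix (Fin n) (Fin n) ℝ)
    (a b : Fin n) : (permMat σ * M) a b = M (σ⁻¹ a) b := by
  simp only [Matrix.mul_apply, permMat, Matrix.of_apply]
  rw [Finset.sum_eq_single (σ⁻¹ a)]
  · simp
  · intro k _ hk
    rw [if_neg, zero_mul]
    intro h
    exact hk (by simp [h])
  · simp

lemma mul_permMat {n : ℕ} (σ : Equiv.Perm (Fin n)) (M : Matrix (Fin n) (Fin n) ℝ)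
    (a b : Fin n) : (M * permMat σ) a b = M a (σ b) := by
  simp only [Matrix.mul_apply, permMat, Matrix.of_apply]
  rw [Finset.sum_eq_single (σ b)]
  · simp
  · intro k _ hk
    rw [if_neg (by exact fun h => hk h), mul_zero]
  · simp

lemma permMat_inv {n : ℕ} (σ : Equiv.Perm (Fin n)) :
    (permMat σ)⁻¹ = permMat σ⁻¹ := by
  apply Matrix.inv_eq_right_inv
  ext a b
  rw [mul_permMat]
  simp only [permMat, Matrix.of_apply, Matrix.one_apply]
  by_cases h : a = b <;> simp [h]

lemma conj_apply {n : ℕ} (σ : Equiv.Perm (Fin n)) (M : Matrix (Fin n) (Fin n) ℝ)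
    (a b : Fin n) : (permMat σ * M * (permMat σ)⁻¹) a b = M (σ⁻¹ a) (σ⁻¹ b) := by
  rw [permMat_inv, mul_permMat, permMat_mul]

lemma mem_LSet_iff {n : ℕ} (σ : Equiv.Perm (Fin n)) (l : Matrix (Fin n) (Fin n) ℝ) :
    l ∈ LSet σ ↔ IsUnitLower l ∧ ∀ i j : Fin n, σ i < σ j → l i j = 0 := by
  constructor
  · rintro ⟨h1, h2⟩
    refine ⟨h1, fun i j hij => ?_⟩
    have := h2 (σ i) (σ j) hij
    rwa [conj_apply, Equiv.Perm.coe_inv, Equiv.symm_apply_apply, Equiv.symm_apply_apply] at this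
  · rintro ⟨h1, h2⟩
    refine ⟨h1, fun a b hab => ?_⟩
    rw [conj_apply]
    exact h2 _ _ (by simpa using hab)

lemma isUnitLower_conj {n : ℕ} (σ : Equiv.Perm (Fin n)) (l : Matrix (Fin n) (Fin n) ℝ)
    (hl : l ∈ LSet σ) : IsUnitLower (permMat σ * l * (permMat σ)⁻¹) := by
  refine ⟨fun i => ?_, hl.2⟩
  rw [conj_apply]
  exact hl.1.1 _

lemma isUnitLower_inv {n : ℕ} (M : Matrix (Fin n) (Fin n) ℝ) (hM : IsUnitLower M) :
    IsUnitLower M⁻¹ := by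
  have hbt : M.BlockTriangular OrderDual.toDual := by
    intro i j hij
    exact hM.2 i j hij
  have hdet : M.det = 1 := by
    rw [Matrix.det_of_lowerTriangular M hbt]
    simp [hM.1]
  haveI : Invertible M := M.invertibleOfIsUnitDet (by simp [hdet])
  have hinv : M⁻¹.BlockTriangular OrderDual.toDual :=
    Matrix.blockTriangular_inv_of_blockTriangular hbt
  have hlow : ∀ i j : Fin n, i < j → M⁻¹ i j = 0 := fun i j hij => hinv hij
  refine ⟨fun i => ?_, hlow⟩
  have h1 : (M * M⁻¹) i i = 1 := by
    rw [Matrix.mul_nonsing_inv M (by simp [hdet])]; simp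
  rw [Matrix.mul_apply, Finset.sum_eq_single i] at h1
  · rwa [hM.1 i, one_mul] at h1
  · intro k _ hk
    rcases lt_or_gt_of_ne hk with h | h
    · rw [hlow k i h, mul_zero]
    · rw [hM.2 i k h, zero_mul]
  · simp

theorem stmt_0 (n : ℕ) (hn : 1 ≤ n) (σ : Equiv.Perm (Fin n)) :
    LSet σ = { l | IsUnitLower l ∧ ∀ i j : Fin n, j < i → σ i < σ j → l i j = 0 } ∧
    (1 : Matrix (Fin n) (Fin n) ℝ) ∈ LSet σ ∧
    (∀ l₁ l₂ : Matrix (Fin n) (Fin n) ℝ, l₁ ∈ LSet σ → l₂ ∈ LSet σ → l₁ * l₂ ∈ LSet σ) ∧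
    (∀ l : Matrix (Fin n) (Fin n) ℝ, l ∈ LSet σ → l⁻¹ ∈ LSet σ) := by
  refine ⟨?_, ?_, ?_, ?_⟩
  · ext l
    rw [mem_LSet_iff]
    constructor
    · rintro ⟨h1, h2⟩
      exact ⟨h1, fun i j _ hσ => h2 i j hσ⟩
    · rintro ⟨h1, h2⟩
      refine ⟨h1, fun i j hσ => ?_⟩
      rcases lt_trichotomy i j with h | h | h
      · exact h1.2 i j h
      · exact absurd (h ▸ hσ) (lt_irrefl _)
      · exact h2 i j h hσ
  · rw [mem_LSet_iff]
    refine ⟨⟨fun i => by simp, fun i j hij => by simp [Matrix.one_apply, hij.ne]⟩,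
      fun i j hσ => ?_⟩
    have : i ≠ j := fun h => absurd (h ▸ hσ) (lt_irrefl _)
    simp [Matrix.one_apply, this]
  · intro l₁ l₂ h₁ h₂
    rw [mem_LSet_iff] at h₁ h₂ ⊢
    obtain ⟨⟨hd₁, hl₁⟩, hs₁⟩ := h₁
    obtain ⟨⟨hd₂, hl₂⟩, hs₂⟩ := h₂
    have key : ∀ i j k : Fin n, (i < j ∨ σ i < σ j) → l₁ i k * l₂ k j = 0 := by
      intro i j k h
      by_cases hik : i < k
      · rw [hl₁ i k hik, zero_mul]
      by_cases hkj : k < j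
      · rw [hl₂ k j hkj, mul_zero]
      -- k ≤ i and j ≤ k
      rcases h with h | h
      · exact absurd h (not_lt.2 ((not_lt.1 hkj).trans (not_lt.1 hik)))
      · by_cases hσik : σ i < σ k
        · rw [hs₁ i k hσik, zero_mul]
        by_cases hσkj : σ k < σ j
        · rw [hs₂ k j hσkj, mul_zero]
        exact absurd h (not_lt.2 ((not_lt.1 hσkj).trans (not_lt.1 hσik)))
    refine ⟨⟨fun i => ?_, fun i j hij => ?_⟩, fun i j hσ => ?_⟩
    · rw [Matrix.mul_apply, Finset.sum_eq_single i]
      · rw [hd₁ i, hd₂ i, one_mul]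
      · intro k _ hk
        rcases lt_or_gt_of_ne hk with h | h
        · exact mul_eq_zero_of_right _ (hl₂ k i h)
        · exact mul_eq_zero_of_left (hl₁ i k h) _
      · simp
    · rw [Matrix.mul_apply]
      exact Finset.sum_eq_zero fun k _ => key i j k (Or.inl hij)
    · rw [Matrix.mul_apply]
      exact Finset.sum_eq_zero fun k _ => key i j k (Or.inr hσ)
  · intro l hl
    have hconj := isUnitLower_conj σ l hl
    have hP : IsUnit (permMat σ).det := by
      have : permMat σ * permMat σ⁻¹ = 1 := by
        ext a b
        rw [mul_permMat]
        simp only [permMat, Matrix.of_apply, Matrix.one_apply]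
        by_cases h : a = b <;> simp [h]
      exact Matrix.isUnit_det_of_right_inverse this
    have hinv : permMat σ * l⁻¹ * (permMat σ)⁻¹ = (permMat σ * l * (permMat σ)⁻¹)⁻¹ := by
      rw [Matrix.mul_inv_rev, Matrix.mul_inv_rev, Matrix.nonsing_inv_nonsing_inv _ hP,
        mul_assoc]
    refine ⟨isUnitLower_inv l hl.1, ?_⟩
    · rw [hinv]
      exact (isUnitLower_inv _ hconj).2
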